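/- Let f : ℝ^d → ℝ be differentiable with L-Lipschitz gradient (L > 0) and bounded below by f*. Let B ≥ 0, let T ≥ 1, and consider the biased gradient descent iteration W_{t+1} = W_t − η·(∇f(W_t) + b_t) with step size η = 1/L, where the bias vectors satisfy ‖b_t‖ ≤ B for all t. Then the average squared gradient norm satisfies (1/T)·Σ_{t=0}^{T−1} ‖∇f(W_t)‖² ≤ 2L·(f(W_0) − f*)/T + B². In particular, the residual error is proportional to the squared bias bound B², and the optimization error term decays at rate O(1/T). -/

import Mathlib

lemma descent_lemma (d : ℕ) (f : EuclideanSpace ℝ (Fin d) → ℝ)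
    (L : ℝ) (hL : 0 < L) (hdiff : Differentiable ℝ f)
    (hlip : ∀ x y, ‖gradient f x - gradient f y‖ ≤ L * ‖x - y‖)
    (x y : EuclideanSpace ℝ (Fin d)) :
    f y ≤ f x + inner ℝ (gradient f x) (y - x) + L / 2 * ‖y - x‖ ^ 2 := by
  set v := y - x with hv
  set φ : ℝ → ℝ := fun t => f (x + t • v) with hφ
  have hc : ∀ t : ℝ, HasDerivAt (fun s : ℝ => x + s • v) v t := by
    intro t
    simpa using ((hasDerivAt_id t).smul_const v).const_add x
  have hgrad : ∀ z, HasGradientAt f (gradient f z) z := fun z =>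
    (hdiff z).hasGradientAt
  have hφ' : ∀ t : ℝ, HasDerivAt φ (inner ℝ (gradient f (x + t • v)) v : ℝ) t := by
    intro t
    have h1 := (hgrad (x + t • v)).hasFDerivAt
    have := h1.comp_hasDerivAt t (hc t)
    exact this
  have hgcont : Continuous (fun z => gradient f z) := by
    have : LipschitzWith (Real.toNNReal L) (gradient f) := by
      apply LipschitzWith.of_dist_le_mul
      intro a b
      rw [dist_eq_norm, dist_eq_norm, Real.coe_toNNReal _ hL.le]
      exact hlip a b
    exact this.continuous
  have hcont : Continuous (fun t : ℝ => (inner ℝ (gradient f (x + t • v)) v : ℝ)) := by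
    exact (hgcont.comp (continuous_const.add (continuous_id'.smul continuous_const))).inner continuous_const
  have hint : ∫ t in (0:ℝ)..1, (inner ℝ (gradient f (x + t • v)) v : ℝ) = φ 1 - φ 0 :=
    intervalIntegral.integral_eq_sub_of_hasDerivAt (fun t _ => hφ' t)
      (hcont.intervalIntegrable 0 1)
  have hbound : ∀ t ∈ Set.Icc (0:ℝ) 1,
      (inner ℝ (gradient f (x + t • v)) v : ℝ) ≤ inner ℝ (gradient f x) v + L * t * ‖v‖ ^ 2 := by
    intro t ht
    have : (inner ℝ (gradient f (x + t • v)) v : ℝ) - inner ℝ (gradient f x) v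
        = inner ℝ (gradient f (x + t • v) - gradient f x) v := by
      rw [inner_sub_left]
    have h2 : (inner ℝ (gradient f (x + t • v) - gradient f x) v : ℝ)
        ≤ ‖gradient f (x + t • v) - gradient f x‖ * ‖v‖ := real_inner_le_norm _ _
    have h3 : ‖gradient f (x + t • v) - gradient f x‖ ≤ L * (t * ‖v‖) := by
      have := hlip (x + t • v) x
      simpa [norm_smul, abs_of_nonneg ht.1, mul_assoc] using this
    nlinarith [norm_nonneg v, mul_le_mul_of_nonneg_right h3 (norm_nonneg v)]
  have hint2 : ∫ t in (0:ℝ)..1, (inner ℝ (gradient f x) v + L * t * ‖v‖ ^ 2 : ℝ)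
      = inner ℝ (gradient f x) v + L / 2 * ‖v‖ ^ 2 := by
    rw [intervalIntegral.integral_add (f := fun _ : ℝ => (inner ℝ (gradient f x) v : ℝ))
      (g := fun t : ℝ => L * t * ‖v‖ ^ 2) ((continuous_const).intervalIntegrable 0 1)
      (((continuous_const.mul continuous_id').mul continuous_const).intervalIntegrable 0 1)]
    have : (fun t : ℝ => L * t * ‖v‖ ^ 2) = fun t : ℝ => (L * ‖v‖ ^ 2) * t := by
      funext t; ring
    rw [this, intervalIntegral.integral_const_mul, integral_id]
    simp
    ring
  have hmono : ∫ t in (0:ℝ)..1, (inner ℝ (gradient f (x + t • v)) v : ℝ)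
      ≤ ∫ t in (0:ℝ)..1, (inner ℝ (gradient f x) v + L * t * ‖v‖ ^ 2 : ℝ) := by
    apply intervalIntegral.integral_mono_on zero_le_one (hcont.intervalIntegrable 0 1)
      ((continuous_const.add ((continuous_const.mul continuous_id').mul continuous_const)).intervalIntegrable 0 1)
      hbound
  have : φ 1 - φ 0 ≤ inner ℝ (gradient f x) v + L / 2 * ‖v‖ ^ 2 := by
    rw [← hint, ← hint2]; exact hmono
  have hφ1 : φ 1 = f y := by simp [hφ, hv]
  have hφ0 : φ 0 = f x := by simp [hφ]
  rw [hφ1, hφ0] at this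
  linarith


open Finset in
/-- Convergence of biased gradient descent: if `f : ℝ^d → ℝ` is differentiable
with `L`-Lipschitz gradient and bounded below by `fstar`, and the iterates
follow `W (t+1) = W t − (1/L) • (∇f (W t) + b t)` with bias `‖b t‖ ≤ B`,
then the average squared gradient norm over `T` rounds satisfies
`(1/T) ∑_{t<T} ‖∇f (W t)‖² ≤ 2L (f (W 0) − fstar) / T + B²`. -/
theorem biased_gradient_descent_convergence
    (d : ℕ) (f : EuclideanSpace ℝ (Fin d) → ℝ)
    (L : ℝ) (hL : 0 < L)
    (hdiff : Differentiable ℝ f)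
    (hlip : ∀ x y, ‖gradient f x - gradient f y‖ ≤ L * ‖x - y‖)
    (fstar : ℝ) (hbound : ∀ x, fstar ≤ f x)
    (B : ℝ) (hB : 0 ≤ B)
    (T : ℕ) (hT : 1 ≤ T)
    (W b : ℕ → EuclideanSpace ℝ (Fin d))
    (hbias : ∀ t, ‖b t‖ ≤ B)
    (hiter : ∀ t, W (t + 1) = W t - (1 / L) • (gradient f (W t) + b t)) :
    (1 / T : ℝ) * ∑ t ∈ Finset.range T, ‖gradient f (W t)‖ ^ 2
      ≤ 2 * L * (f (W 0) - fstar) / T + B ^ 2 := by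

  have key : ∀ t, ‖gradient f (W t)‖ ^ 2
      ≤ 2 * L * (f (W t) - f (W (t + 1))) + B ^ 2 := by
    intro t
    set g := gradient f (W t) with hg
    have hd := descent_lemma d f L hL hdiff hlip (W t) (W (t + 1))
    have hvdef : W (t + 1) - W t = -((1 / L) • (g + b t)) := by
      rw [hiter t]; abel
    rw [hvdef] at hd
    have hinner : (inner ℝ g (-((1 / L) • (g + b t))) : ℝ)
        = -(1 / L) * (‖g‖ ^ 2 + inner ℝ g (b t)) := by
      rw [inner_neg_right, real_inner_smul_right, inner_add_right,
        real_inner_self_eq_norm_sq]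
      ring
    have hnorm : ‖-((1 / L) • (g + b t))‖ ^ 2 = (1 / L) ^ 2 * ‖g + b t‖ ^ 2 := by
      rw [norm_neg, norm_smul]
      simp [abs_of_pos (by positivity : (0:ℝ) < 1 / L), mul_pow]
    rw [hinner, hnorm] at hd
    have hexp : ‖g + b t‖ ^ 2 = ‖g‖ ^ 2 + 2 * inner ℝ g (b t) + ‖b t‖ ^ 2 :=
      norm_add_sq_real g (b t)
    rw [hexp] at hd
    have hb2 : ‖b t‖ ^ 2 ≤ B ^ 2 := by
      have := hbias t
      nlinarith [norm_nonneg (b t)]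
    have hLne : L ≠ 0 := hL.ne'
    have hd' : f (W (t + 1)) ≤ f (W t) - ‖g‖ ^ 2 / (2 * L) + ‖b t‖ ^ 2 / (2 * L) :=
      hd.trans_eq (by field_simp; ring)
    have h1 : ‖g‖ ^ 2 / (2 * L) ≤ f (W t) - f (W (t + 1)) + ‖b t‖ ^ 2 / (2 * L) := by
      linarith
    have h2 := mul_le_mul_of_nonneg_left h1 (by positivity : (0:ℝ) ≤ 2 * L)
    have e1 : 2 * L * (‖g‖ ^ 2 / (2 * L)) = ‖g‖ ^ 2 := by field_simp
    have e2 : 2 * L * (f (W t) - f (W (t + 1)) + ‖b t‖ ^ 2 / (2 * L))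
        = 2 * L * (f (W t) - f (W (t + 1))) + ‖b t‖ ^ 2 := by field_simp
    rw [e1, e2] at h2
    linarith
  have hsum : ∑ t ∈ Finset.range T, ‖gradient f (W t)‖ ^ 2
      ≤ 2 * L * (f (W 0) - f (W T)) + T * B ^ 2 := by
    calc ∑ t ∈ Finset.range T, ‖gradient f (W t)‖ ^ 2
        ≤ ∑ t ∈ Finset.range T, (2 * L * (f (W t) - f (W (t + 1))) + B ^ 2) :=
          Finset.sum_le_sum fun t _ => key t
      _ = 2 * L * (f (W 0) - f (W T)) + T * B ^ 2 := by
          rw [Finset.sum_add_distrib, ← Finset.mul_sum, Finset.sum_range_sub']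
          simp [mul_comm]
  have hTpos : (0:ℝ) < T := by exact_mod_cast hT
  have hfT : fstar ≤ f (W T) := hbound _
  have hS : ∑ t ∈ Finset.range T, ‖gradient f (W t)‖ ^ 2
      ≤ 2 * L * (f (W 0) - fstar) + T * B ^ 2 := by nlinarith
  calc (1 / T : ℝ) * ∑ t ∈ Finset.range T, ‖gradient f (W t)‖ ^ 2
      = (∑ t ∈ Finset.range T, ‖gradient f (W t)‖ ^ 2) / T := by ring
    _ ≤ (2 * L * (f (W 0) - fstar) + T * B ^ 2) / T := by gcongr
    _ = 2 * L * (f (W 0) - fstar) / T + B ^ 2 := by field_simp
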